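/- In the uniform-machines lower-bound instance with machine groups G_0,...,G_k (group G_j has m_j machines of speed 2^{−j}, m_0 = 1, m_j = Σ_{t<j} m_t·2^{j−t}) and job groups J_0,...,J_k (J_j has 2m_j jobs of length 2^{−j} for j < k, and J_k has 3m_k jobs of length 2^{−k}), the strategy profile σ that places on each machine of group G_j two jobs of length 2^{−j} and, for every j < i ≤ k, 2^{i−j} jobs of length 2^{−i}, gives every job of group J_j cost exactly k − j + 2 under the EQUI policy, and σ is a pure Nash equilibrium. -/

import Mathlib

lemma min_pow_half (a b : ℕ) :
    min ((1/2:ℝ)^a) ((1/2:ℝ)^b) = (1/2:ℝ)^(max a b) := by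
  rcases le_total a b with h | h
  · rw [max_eq_right h, min_eq_right
      (pow_le_pow_of_le_one (by norm_num) (by norm_num) h)]
  · rw [max_eq_left h, min_eq_left
      (pow_le_pow_of_le_one (by norm_num) (by norm_num) h)]

lemma coeff_sum (g j : ℕ) (hg : g ≤ j) :
    ∑ j' ∈ Finset.range (j+1),
      (if j' < g then (0:ℝ) else if j' = g then 2 else 2^(j'-g)) = 2^(j-g+1) := by
  induction j, hg using Nat.le_induction with
  | base =>
    rw [Finset.sum_range_succ]
    have : ∀ j' ∈ Finset.range g,
        (if j' < g then (0:ℝ) else if j' = g then 2 else 2^(j'-g)) = 0 := by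
      intro j' hj'; simp [Finset.mem_range.mp hj']
    rw [Finset.sum_congr rfl this]
    simp
  | succ n hn ih =>
    rw [Finset.sum_range_succ, ih]
    have h1 : ¬ (n+1 < g) := by omega
    have h2 : ¬ (n+1 = g) := by omega
    rw [if_neg h1, if_neg h2]
    have e1 : n + 1 - g = (n - g) + 1 := by omega
    rw [e1, pow_succ, pow_succ]
    ring

lemma sum_formula (k g j : ℕ) (hg : g ≤ j) (hj : j ≤ k) :
    ∑ j' ∈ Finset.range (k+1),
      (if j' < g then (0:ℝ) else if j' = g then 2 else 2^(j'-g)) * (1/2:ℝ)^(max j j')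
    = ((k:ℝ) - j + 2) * (1/2)^g := by
  induction k, hj using Nat.le_induction with
  | base =>
    have hc : ∀ j' ∈ Finset.range (j+1),
        (if j' < g then (0:ℝ) else if j' = g then 2 else 2^(j'-g)) * (1/2:ℝ)^(max j j')
        = (if j' < g then (0:ℝ) else if j' = g then 2 else 2^(j'-g)) * (1/2:ℝ)^j := by
      intro j' hj'
      have := Finset.mem_range.mp hj'
      rw [max_eq_left (by omega)]
    rw [Finset.sum_congr rfl hc, ← Finset.sum_mul, coeff_sum g j hg]
    have hr : ((j:ℝ) - j + 2) = 2 := by ring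
    rw [hr]
    have hjd : j = g + (j - g) := by omega
    have hone : ((2:ℝ)^(j-g)) * ((1/2:ℝ)^(j-g)) = 1 := by
      rw [← mul_pow]; norm_num
    calc (2:ℝ)^(j-g+1) * (1/2)^j = 2^(j-g+1) * (1/2)^(g+(j-g)) := by rw [← hjd]
    _ = 2 * (1/2)^g := by
        rw [pow_succ, pow_add]
        linear_combination 2 * (1/2:ℝ)^g * hone
  | succ n hn ih =>
    rw [Finset.sum_range_succ, ih]
    have h1 : ¬ (n+1 < g) := by omega
    have h2 : ¬ (n+1 = g) := by omega
    rw [if_neg h1, if_neg h2, max_eq_right (by omega : j ≤ n+1)]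
    have key : (2:ℝ)^(n+1-g) * (1/2)^(n+1) = (1/2)^g := by
      have h4 : n + 1 = g + (n+1-g) := by omega
      have hone : ((2:ℝ)^(n+1-g)) * ((1/2:ℝ)^(n+1-g)) = 1 := by
        rw [← mul_pow]; norm_num
      calc (2:ℝ)^(n+1-g) * (1/2)^(n+1) = 2^(n+1-g) * (1/2)^(g+(n+1-g)) := by rw [← h4]
      _ = (1/2)^g := by rw [pow_add]; linear_combination (1/2:ℝ)^g * hone
    rw [key]
    push_cast
    ring



/-- the uniform-machines lower-bound instance. Machine groups
`G_0,…,G_k` (group `j` has `mnum j` machines of speed `2^{−j}`, with `mnum 0 = 1` and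
`mnum j = Σ_{t<j} mnum t · 2^{j−t}`), job groups `J_0,…,J_k` (`J_j` has `2·mnum j` jobs
of length `2^{−j}` for `j < k`, and `J_k` has `3·mnum k` jobs of length `2^{−k}`). In
the profile `σ` placing on each machine of group `j` two jobs of length `2^{−j}` and,
for every `j < i ≤ k`, `2^{i−j}` jobs of length `2^{−i}`, every job of group `j` has
EQUI cost exactly `k − j + 2`, and `σ` is a pure Nash equilibrium. -/
theorem equi_uniform_lower_bound_profile
    (k : ℕ) (M J : Type) [Fintype M] [DecidableEq M] [Fintype J] [DecidableEq J]
    (mg : M → Fin (k + 1)) (jg : J → Fin (k + 1)) (mnum : ℕ → ℕ)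
    (hm0 : mnum 0 = 1)
    (hmrec : ∀ j : ℕ, 1 ≤ j → j ≤ k →
      mnum j = ∑ t ∈ Finset.range j, mnum t * 2 ^ (j - t))
    (hMcard : ∀ j : Fin (k + 1),
      (Finset.univ.filter (fun x : M => mg x = j)).card = mnum j.val)
    (hJcard : ∀ j : Fin (k + 1),
      (Finset.univ.filter (fun i : J => jg i = j)).card =
        if j.val = k then 3 * mnum k else 2 * mnum j.val)
    (len : J → ℝ) (hlen : ∀ i, len i = (1 / 2 : ℝ) ^ (jg i : ℕ))
    (sp : M → ℝ) (hsp : ∀ x, sp x = (1 / 2 : ℝ) ^ (mg x : ℕ))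
    (σ : J → M)
    (hσ : ∀ (x : M) (j : Fin (k + 1)),
      (Finset.univ.filter (fun i : J => σ i = x ∧ jg i = j)).card =
        if j.val < (mg x : ℕ) then 0
        else if j.val = (mg x : ℕ) then 2
        else 2 ^ (j.val - (mg x : ℕ)))
    (cost : (J → M) → J → ℝ)
    (hcost : ∀ (τ : J → M) (i : J), cost τ i =
      (sp (τ i))⁻¹ *
        ∑ i' ∈ Finset.univ.filter (fun i' => τ i' = τ i), min (len i) (len i')) :
    (∀ i : J, cost σ i = (k : ℝ) - (jg i : ℕ) + 2) ∧
    (∀ (i : J) (x : M), cost σ i ≤ cost (Function.update σ i x) i) := by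
  -- the fiberwise decomposition of the EQUI sum on any machine, for any length exponent
  have Skey : ∀ (x : M) (j : ℕ),
      ∑ i' ∈ Finset.univ.filter (fun i' => σ i' = x), min ((1/2:ℝ)^j) (len i')
      = ∑ j' ∈ Finset.range (k+1),
          (if j' < (mg x : ℕ) then (0:ℝ) else if j' = (mg x : ℕ) then 2
            else 2^(j' - (mg x : ℕ))) * (1/2:ℝ)^(max j j') := by
    intro x j
    have h1 : ∑ i' ∈ Finset.univ.filter (fun i' => σ i' = x), min ((1/2:ℝ)^j) (len i')
        = ∑ i' ∈ Finset.univ.filter (fun i' => σ i' = x), (1/2:ℝ)^(max j (jg i' : ℕ)) := by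
      refine Finset.sum_congr rfl fun i' _ => ?_
      rw [hlen, min_pow_half]
    rw [h1, ← Finset.sum_fiberwise (Finset.univ.filter (fun i' => σ i' = x)) jg
        (fun i' => (1/2:ℝ)^(max j (jg i' : ℕ)))]
    have h2 : ∀ j' : Fin (k+1),
        ∑ i' ∈ (Finset.univ.filter (fun i' => σ i' = x)).filter (fun i' => jg i' = j'),
          (1/2:ℝ)^(max j (jg i' : ℕ))
        = (if (j':ℕ) < (mg x : ℕ) then (0:ℝ) else if (j':ℕ) = (mg x:ℕ) then 2
            else 2^((j':ℕ) - (mg x:ℕ))) * (1/2:ℝ)^(max j (j':ℕ)) := by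
      intro j'
      have hc : ∀ i' ∈ (Finset.univ.filter (fun i' => σ i' = x)).filter
          (fun i' => jg i' = j'),
          (1/2:ℝ)^(max j (jg i' : ℕ)) = (1/2:ℝ)^(max j (j':ℕ)) := by
        intro i' hi'
        rw [Finset.mem_filter] at hi'
        rw [hi'.2]
      rw [Finset.sum_congr rfl hc, Finset.sum_const, Finset.filter_filter, hσ x j',
        nsmul_eq_mul]
      push_cast
      ring
    rw [Finset.sum_congr rfl (fun j' _ => h2 j')]
    rw [← Fin.sum_univ_eq_sum_range (fun j' =>
      (if j' < (mg x : ℕ) then (0:ℝ) else if j' = (mg x : ℕ) then 2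
        else 2^(j' - (mg x : ℕ))) * (1/2:ℝ)^(max j j')) (k+1)]
  -- every job sits on a machine whose group index is at most the job's
  have hgle : ∀ i : J, (mg (σ i) : ℕ) ≤ (jg i : ℕ) := by
    intro i
    by_contra h
    push_neg at h
    have hc := hσ (σ i) (jg i)
    rw [if_pos h] at hc
    have hmem : i ∈ Finset.univ.filter (fun i' => σ i' = σ i ∧ jg i' = jg i) := by
      simp
    rw [Finset.card_eq_zero] at hc
    rw [hc] at hmem
    exact absurd hmem (Finset.notMem_empty i)
  have hpow_ne : ∀ n : ℕ, ((1/2:ℝ)^n) ≠ 0 := fun n => by positivity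
  -- Part 1
  have part1 : ∀ i : J, cost σ i = (k : ℝ) - (jg i : ℕ) + 2 := by
    intro i
    rw [hcost, hsp]
    have hl : ∀ i' ∈ Finset.univ.filter (fun i' => σ i' = σ i),
        min (len i) (len i') = min ((1/2:ℝ)^(jg i : ℕ)) (len i') := by
      intro i' _
      rw [hlen i]
    rw [Finset.sum_congr rfl hl, Skey (σ i) (jg i : ℕ),
      sum_formula k (mg (σ i) : ℕ) (jg i : ℕ) (hgle i) (by omega : (jg i : ℕ) ≤ k)]
    field_simp
  refine ⟨part1, ?_⟩
  intro i x
  by_cases hx : x = σ i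
  · subst hx
    rw [Function.update_eq_self]
  · set σ' := Function.update σ i x with hσ'
    have hσ'i : σ' i = x := Function.update_self i x σ
    have hσ'ne : ∀ i' : J, i' ≠ i → σ' i' = σ i' := fun i' h =>
      Function.update_of_ne h x σ
    have hfilter : Finset.univ.filter (fun i' => σ' i' = σ' i)
        = insert i (Finset.univ.filter (fun i' => σ i' = x)) := by
      ext i'
      simp only [Finset.mem_filter, Finset.mem_univ, true_and, Finset.mem_insert]
      by_cases h : i' = i
      · subst h; simp [hσ'i]
      · rw [hσ'ne i' h, hσ'i]
        constructor
        · exact fun hh => Or.inr hh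
        · rintro (hh | hh)
          · exact absurd hh h
          · exact hh
    have hnotmem : i ∉ Finset.univ.filter (fun i' => σ i' = x) := by
      simp only [Finset.mem_filter, Finset.mem_univ, true_and]
      exact fun hh => hx hh.symm
    rw [hcost σ' i, hfilter, Finset.sum_insert hnotmem, hσ'i, hsp x]
    have hl : ∀ i' ∈ Finset.univ.filter (fun i' => σ i' = x),
        min (len i) (len i') = min ((1/2:ℝ)^(jg i : ℕ)) (len i') := by
      intro i' _
      rw [hlen i]
    rw [Finset.sum_congr rfl hl, Skey x (jg i : ℕ), part1 i]
    set j : ℕ := (jg i : ℕ)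
    set g' : ℕ := (mg x : ℕ)
    have hjk : j ≤ k := by omega
    have hg'k : g' ≤ k := by omega
    have hmin : min (len i) (len i) = (1/2:ℝ)^j := by rw [hlen i, min_self]
    rw [hmin]
    rcases le_or_gt g' j with hcase | hcase
    · -- moving to a machine at least as fast (relative to the job)
      rw [sum_formula k g' j hcase hjk]
      have hpos : (0:ℝ) < ((1/2:ℝ)^g')⁻¹ * (1/2:ℝ)^j := by positivity
      have hne := hpow_ne g'
      have : ((1/2:ℝ)^g')⁻¹ * ((1/2:ℝ)^j + ((k:ℝ) - j + 2) * (1/2)^g')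
          = ((1/2:ℝ)^g')⁻¹ * (1/2:ℝ)^j + ((k:ℝ) - j + 2) := by
        field_simp
      rw [this]
      linarith
    · -- moving to a strictly slower machine
      have hcongr : ∑ j' ∈ Finset.range (k+1),
          (if j' < g' then (0:ℝ) else if j' = g' then 2 else 2^(j'-g')) * (1/2:ℝ)^(max j j')
          = ∑ j' ∈ Finset.range (k+1),
          (if j' < g' then (0:ℝ) else if j' = g' then 2 else 2^(j'-g')) * (1/2:ℝ)^(max g' j') := by
        refine Finset.sum_congr rfl fun j' _ => ?_
        by_cases h : j' < g'
        · simp [h]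
        · push_neg at h
          rw [max_eq_right (by omega : j ≤ j'), max_eq_right h]
      rw [hcongr, sum_formula k g' g' le_rfl hg'k]
      -- cost = 2^(g'-j) + (k - g' + 2), need ≥ k - j + 2
      set d : ℕ := g' - j with hd
      have hdpos : 1 ≤ d := by omega
      have hg'd : g' = j + d := by omega
      have hkey : ((1/2:ℝ)^g')⁻¹ * (1/2:ℝ)^j = 2^d := by
        have hone : ((2:ℝ)^d) * ((1/2:ℝ)^d) = 1 := by rw [← mul_pow]; norm_num
        rw [hg'd, pow_add]
        field_simp
        rw [mul_comm]; exact hone.symm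
      have hexp : ((1/2:ℝ)^g')⁻¹ * ((1/2:ℝ)^j + ((k:ℝ) - g' + 2) * (1/2)^g')
          = (2:ℝ)^d + ((k:ℝ) - g' + 2) := by
        rw [mul_add, hkey]
        congr 1
        field_simp
      rw [hexp]
      have hdle : (d:ℝ) ≤ (2:ℝ)^d := by
        have := Nat.lt_two_pow_self (n := d)
        have : (d:ℝ) < ((2:ℕ):ℝ)^d := by exact_mod_cast this
        push_cast at this
        linarith
      have hgcast : (g':ℝ) = (j:ℝ) + d := by exact_mod_cast hg'd
      linarith
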